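/- Fix θ ∈ (0,π) and let Q_u = ⋂_{m∈ℤ} H_m ⊂ tildeL with H_m = {(z,α,r) ∈ tildeL : r·cos(α+mθ) ≤ 1 or |α+mθ| ≥ π/2}. Then there exists a continuous function S : ℂ×ℝ → ℝ with S > 0 everywhere such that, writing λ(z,α,r) = √(r² − |z|²), one has Q_u = {(z,α,r) ∈ tildeL : λ(z,α,r) ≤ S(z/λ(z,α,r), α)} and the frontier of Q_u in tildeL equals {(z,α,r) ∈ tildeL : λ(z,α,r) = S(z/λ(z,α,r), α)}; i.e. Q_u is the subgraph of a continuous section of the ℝ₊-bundle tildeL ≅ tildeG × ℝ₊ and its boundary is the graph of that section. -/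

import Mathlib

open Real

/-- `tildeL = {(z,α,r) ∈ ℂ×ℝ×ℝ : 0 < r, |z| < r}` (an open subset of `ℂ×ℝ×ℝ`,
so the frontier within `tildeL` is the ambient frontier intersected with `tildeL`). -/
def tL : Set (ℂ × ℝ × ℝ) := {x | 0 < x.2.2 ∧ ‖x.1‖ < x.2.2}

/-- `λ(z,α,r) = √(r² − |z|²)`, the fibre coordinate of the bundle `tildeL ≅ tildeG × ℝ₊`. -/
noncomputable def lamb (x : ℂ × ℝ × ℝ) : ℝ := Real.sqrt (x.2.2 ^ 2 - ‖x.1‖ ^ 2)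

/-- `H_m = {(z,α,r) ∈ tildeL : r·cos(α+mθ) ≤ 1 or |α+mθ| ≥ π/2}`. -/
noncomputable def Hhalf (θ : ℝ) (m : ℤ) : Set (ℂ × ℝ × ℝ) :=
  {x ∈ tL | x.2.2 * Real.cos (x.2.1 + (m : ℝ) * θ) ≤ 1 ∨ π / 2 ≤ |x.2.1 + (m : ℝ) * θ|}

/-- The prismatic set `Q_u = ⋂_{m∈ℤ} H_m`. -/
noncomputable def Qu (θ : ℝ) : Set (ℂ × ℝ × ℝ) := ⋂ m : ℤ, Hhalf θ m

/-- Distance from `α` to the lattice `θℤ`. -/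
noncomputable def dd (θ α : ℝ) : ℝ := Metric.infDist α (Set.range fun m : ℤ => (m : ℝ) * θ)

lemma dd_cont (θ : ℝ) : Continuous (dd θ) := Metric.continuous_infDist_pt _

lemma dd_nonneg (θ α : ℝ) : 0 ≤ dd θ α := Metric.infDist_nonneg

lemma dd_le (θ α : ℝ) (m : ℤ) : dd θ α ≤ |α + (m : ℝ) * θ| := by
  have h : ((-m : ℤ) : ℝ) * θ ∈ Set.range fun m : ℤ => (m : ℝ) * θ := ⟨-m, rfl⟩
  have h2 := Metric.infDist_le_dist_of_mem (x := α) h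
  rw [Real.dist_eq] at h2
  push_cast at h2
  have : α - -(m : ℝ) * θ = α + (m : ℝ) * θ := by ring
  rwa [this] at h2

lemma round_half (θ : ℝ) (hθ : 0 < θ) (α : ℝ) :
    |α - (round (α / θ) : ℝ) * θ| ≤ θ / 2 := by
  have h := abs_sub_round (α / θ)
  have hne : θ ≠ 0 := ne_of_gt hθ
  have heq : α - (round (α / θ) : ℝ) * θ = (α / θ - round (α / θ)) * θ := by
    field_simp
  rw [heq, abs_mul, abs_of_pos hθ]
  calc |α / θ - (round (α / θ) : ℝ)| * θ ≤ (1 / 2) * θ := by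
        exact mul_le_mul_of_nonneg_right h (le_of_lt hθ)
    _ = θ / 2 := by ring

lemma dd_exists (θ : ℝ) (hθ : 0 < θ) (α : ℝ) :
    ∃ m : ℤ, |α + (m : ℝ) * θ| = dd θ α := by
  refine ⟨-round (α / θ), ?_⟩
  have key : α + ((-round (α / θ) : ℤ) : ℝ) * θ = α - (round (α / θ) : ℝ) * θ := by
    push_cast; ring
  rw [key]
  set t := α - (round (α / θ) : ℝ) * θ with ht
  have htle : |t| ≤ θ / 2 := round_half θ hθ α
  refine le_antisymm ?_ ?_
  · -- |t| ≤ dd θ α : every lattice point is at distance ≥ |t|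
    by_contra hlt
    push_neg at hlt
    have hne : (Set.range fun m : ℤ => (m : ℝ) * θ).Nonempty := ⟨(0 : ℝ), 0, by simp⟩
    rw [dd] at hlt
    obtain ⟨y, ⟨m, rfl⟩, hy⟩ := (Metric.infDist_lt_iff hne).1 hlt
    rw [Real.dist_eq] at hy
    -- α - mθ = t + (round(α/θ) - m)θ
    rcases eq_or_ne m (round (α / θ)) with h | h
    · subst h; exact absurd hy (by simp [ht])
    · have hk : (1 : ℝ) ≤ |(round (α / θ) : ℝ) - m| := by
        have : (1 : ℤ) ≤ |round (α / θ) - m| :=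
          Int.one_le_abs (sub_ne_zero.2 (Ne.symm h))
        calc (1 : ℝ) = ((1 : ℤ) : ℝ) := by norm_num
          _ ≤ ((|round (α / θ) - m| : ℤ) : ℝ) := by exact_mod_cast this
          _ = |(round (α / θ) : ℝ) - m| := by push_cast; simp
      have heq2 : α - (m : ℝ) * θ = t + ((round (α / θ) : ℝ) - m) * θ := by
        rw [ht]; ring
      rw [heq2] at hy
      have h1 := abs_sub_abs_le_abs_sub (((round (α / θ) : ℝ) - m) * θ) (-t)
      rw [abs_neg, sub_neg_eq_add] at h1
      rw [add_comm t] at hy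
      have h2 : θ ≤ |((round (α / θ) : ℝ) - m) * θ| := by
        rw [abs_mul, abs_of_pos hθ]
        nlinarith
      linarith
  · exact dd_le θ α (-round (α / θ)) |>.trans_eq (by rw [key])

lemma dd_le_half (θ : ℝ) (hθ : 0 < θ) (α : ℝ) : dd θ α ≤ θ / 2 := by
  obtain ⟨m, hm⟩ := dd_exists θ hθ α
  rw [← hm]
  have h1 : dd θ α ≤ |α + ((-round (α / θ) : ℤ) : ℝ) * θ| := dd_le θ α _
  have h2 : |α + ((-round (α / θ) : ℤ) : ℝ) * θ| ≤ θ / 2 := by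
    have key : α + ((-round (α / θ) : ℤ) : ℝ) * θ = α - (round (α / θ) : ℝ) * θ := by
      push_cast; ring
    rw [key]; exact round_half θ hθ α
  rw [hm]; exact h1.trans h2

lemma cos_dd_pos (θ : ℝ) (hθ : 0 < θ) (hθπ : θ < π) (α : ℝ) : 0 < Real.cos (dd θ α) := by
  apply Real.cos_pos_of_mem_Ioo
  constructor
  · have := dd_nonneg θ α; have := Real.pi_pos; linarith
  · have := dd_le_half θ hθ α; linarith

theorem stmt17 (θ : ℝ) (hθ : 0 < θ) (hθπ : θ < π) :
    ∃ S : ℂ × ℝ → ℝ, Continuous S ∧ (∀ p, 0 < S p) ∧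
      Qu θ = {x ∈ tL | lamb x ≤ S ((lamb x)⁻¹ • x.1, x.2.1)} ∧
      frontier (Qu θ) ∩ tL = {x ∈ tL | lamb x = S ((lamb x)⁻¹ • x.1, x.2.1)} := by
  have hcos : ∀ β, 0 < Real.cos (dd θ β) := cos_dd_pos θ hθ hθπ
  -- the section
  set S : ℂ × ℝ → ℝ := fun p => (Real.sqrt (1 + ‖p.1‖ ^ 2) * Real.cos (dd θ p.2))⁻¹ with hS
  have hsqrt_pos : ∀ p : ℂ × ℝ, 0 < Real.sqrt (1 + ‖p.1‖ ^ 2) := by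
    intro p; apply Real.sqrt_pos.2; positivity
  have hden_pos : ∀ p : ℂ × ℝ, 0 < Real.sqrt (1 + ‖p.1‖ ^ 2) * Real.cos (dd θ p.2) := by
    intro p; exact mul_pos (hsqrt_pos p) (hcos p.2)
  have hScont : Continuous S := by
    apply Continuous.inv₀
    · exact ((continuous_const.add ((continuous_norm.comp continuous_fst).pow 2)).sqrt).mul
        (Real.continuous_cos.comp ((dd_cont θ).comp continuous_snd))
    · intro p; exact ne_of_gt (hden_pos p)
  have hSpos : ∀ p, 0 < S p := fun p => inv_pos.2 (hden_pos p)
  -- basic facts on tL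
  have hlamb_pos : ∀ x ∈ tL, 0 < lamb x := by
    intro x hx
    apply Real.sqrt_pos.2
    have h1 := hx.1; have h2 := hx.2
    have h3 : 0 ≤ ‖x.1‖ := norm_nonneg _
    nlinarith
  have hsqrt_eq : ∀ x ∈ tL, Real.sqrt (1 + ‖(lamb x)⁻¹ • x.1‖ ^ 2) = x.2.2 / lamb x := by
    intro x hx
    have hl := hlamb_pos x hx
    have hl2 : lamb x ^ 2 = x.2.2 ^ 2 - ‖x.1‖ ^ 2 := by
      rw [lamb, Real.sq_sqrt]
      nlinarith [hx.1, hx.2, norm_nonneg x.1]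
    have : ‖(lamb x)⁻¹ • x.1‖ = ‖x.1‖ / lamb x := by
      rw [norm_smul, norm_inv, Real.norm_eq_abs, abs_of_pos hl, div_eq_inv_mul]
    rw [this]
    have h1 : 1 + (‖x.1‖ / lamb x) ^ 2 = (x.2.2 / lamb x) ^ 2 := by
      field_simp
      nlinarith [hl2]
    rw [h1, Real.sqrt_sq (le_of_lt (div_pos hx.1 hl))]
  have hSx : ∀ x ∈ tL, S ((lamb x)⁻¹ • x.1, x.2.1) = (x.2.2 / lamb x * Real.cos (dd θ x.2.1))⁻¹ := by
    intro x hx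
    simp only [hS]
    rw [hsqrt_eq x hx]
  -- key characterization of Qu on tL
  have key : ∀ x ∈ tL, (x ∈ Qu θ ↔ x.2.2 * Real.cos (dd θ x.2.1) ≤ 1) := by
    intro x hx
    constructor
    · intro hQ
      obtain ⟨m, hm⟩ := dd_exists θ hθ x.2.1
      have hmem := Set.mem_iInter.1 hQ m
      rcases hmem.2 with h | h
      · have hcoseq : Real.cos (x.2.1 + (m : ℝ) * θ) = Real.cos (dd θ x.2.1) := by
          rw [← hm, ← Real.cos_abs]
        rwa [hcoseq] at h
      · exfalso
        have h1 : |x.2.1 + (m : ℝ) * θ| ≤ θ / 2 := by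
          rw [hm]; exact dd_le_half θ hθ x.2.1
        have := Real.pi_pos
        linarith
    · intro h
      apply Set.mem_iInter.2
      intro m
      refine ⟨hx, ?_⟩
      by_cases hcase : π / 2 ≤ |x.2.1 + (m : ℝ) * θ|
      · exact Or.inr hcase
      · left
        push_neg at hcase
        have h1 : dd θ x.2.1 ≤ |x.2.1 + (m : ℝ) * θ| := dd_le θ x.2.1 m
        have h2 : Real.cos (x.2.1 + (m : ℝ) * θ) ≤ Real.cos (dd θ x.2.1) := by
          rw [← Real.cos_abs (x.2.1 + (m : ℝ) * θ)]
          apply Real.cos_le_cos_of_nonneg_of_le_pi (dd_nonneg θ x.2.1) _ h1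
          have := Real.pi_pos; linarith
        calc x.2.2 * Real.cos (x.2.1 + (m : ℝ) * θ) ≤ x.2.2 * Real.cos (dd θ x.2.1) :=
              mul_le_mul_of_nonneg_left h2 (le_of_lt hx.1)
          _ ≤ 1 := h
  -- translate the inequality to the λ form
  have hiff_le : ∀ x ∈ tL,
      (lamb x ≤ S ((lamb x)⁻¹ • x.1, x.2.1) ↔ x.2.2 * Real.cos (dd θ x.2.1) ≤ 1) := by
    intro x hx
    have hl := hlamb_pos x hx
    rw [hSx x hx]
    have hb : 0 < x.2.2 / lamb x * Real.cos (dd θ x.2.1) := by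
      apply mul_pos (div_pos hx.1 hl) (hcos _)
    rw [inv_eq_one_div, le_div_iff₀ hb]
    constructor <;> intro h
    · have : lamb x * (x.2.2 / lamb x * Real.cos (dd θ x.2.1)) = x.2.2 * Real.cos (dd θ x.2.1) := by
        field_simp
      linarith [this ▸ h]
    · have heq : lamb x * (x.2.2 / lamb x * Real.cos (dd θ x.2.1)) = x.2.2 * Real.cos (dd θ x.2.1) := by
        field_simp
      rw [heq]; exact h
  have hiff_eq : ∀ x ∈ tL,
      (lamb x = S ((lamb x)⁻¹ • x.1, x.2.1) ↔ x.2.2 * Real.cos (dd θ x.2.1) = 1) := by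
    intro x hx
    have hl := hlamb_pos x hx
    rw [hSx x hx]
    have hb : 0 < x.2.2 / lamb x * Real.cos (dd θ x.2.1) := by
      apply mul_pos (div_pos hx.1 hl) (hcos _)
    rw [inv_eq_one_div, eq_div_iff (ne_of_gt hb)]
    have heq : lamb x * (x.2.2 / lamb x * Real.cos (dd θ x.2.1)) = x.2.2 * Real.cos (dd θ x.2.1) := by
      field_simp
    rw [heq]
  -- set equality
  have hQeq : Qu θ = {x ∈ tL | x.2.2 * Real.cos (dd θ x.2.1) ≤ 1} := by
    ext x
    constructor
    · intro hx
      have hxtL : x ∈ tL := (Set.mem_iInter.1 hx 0).1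
      exact ⟨hxtL, (key x hxtL).1 hx⟩
    · intro ⟨hxtL, hle⟩
      exact (key x hxtL).2 hle
  refine ⟨S, hScont, hSpos, ?_, ?_⟩
  · rw [hQeq]
    ext x
    simp only [Set.mem_setOf_eq]
    constructor
    · intro ⟨hxtL, h⟩; exact ⟨hxtL, (hiff_le x hxtL).2 h⟩
    · intro ⟨hxtL, h⟩; exact ⟨hxtL, (hiff_le x hxtL).1 h⟩
  · -- frontier
    have htL_open : IsOpen tL := by
      have : tL = {x : ℂ × ℝ × ℝ | 0 < x.2.2} ∩ {x | ‖x.1‖ < x.2.2} := rfl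
      rw [this]
      exact (isOpen_lt continuous_const (continuous_snd.comp continuous_snd)).inter
        (isOpen_lt (continuous_norm.comp continuous_fst) (continuous_snd.comp continuous_snd))
    have hg_cont : Continuous fun x : ℂ × ℝ × ℝ => x.2.2 * Real.cos (dd θ x.2.1) :=
      (continuous_snd.comp continuous_snd).mul
        (Real.continuous_cos.comp ((dd_cont θ).comp (continuous_fst.comp continuous_snd)))
    ext x
    simp only [Set.mem_inter_iff, Set.mem_setOf_eq]
    constructor
    · rintro ⟨hfr, hxtL⟩
      refine ⟨hxtL, (hiff_eq x hxtL).2 ?_⟩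
      by_contra hne
      rcases lt_or_gt_of_ne hne with hlt | hgt
      · -- interior point of Qu
        have hmem : x ∈ interior (Qu θ) := by
          rw [hQeq]
          apply mem_interior.2
          exact ⟨tL ∩ {y | y.2.2 * Real.cos (dd θ y.2.1) < 1},
            fun y hy => ⟨hy.1, le_of_lt hy.2⟩,
            htL_open.inter (isOpen_lt hg_cont continuous_const), hxtL, hlt⟩
        exact hfr.2 hmem
      · -- x is in an open set disjoint from Qu
        have hopen : IsOpen (tL ∩ {y : ℂ × ℝ × ℝ | 1 < y.2.2 * Real.cos (dd θ y.2.1)}) :=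
          htL_open.inter (isOpen_lt continuous_const hg_cont)
        have hxU : x ∈ tL ∩ {y : ℂ × ℝ × ℝ | 1 < y.2.2 * Real.cos (dd θ y.2.1)} := ⟨hxtL, hgt⟩
        have hdisj : (tL ∩ {y : ℂ × ℝ × ℝ | 1 < y.2.2 * Real.cos (dd θ y.2.1)}) ∩ Qu θ = ∅ := by
          rw [hQeq]
          ext y
          simp only [Set.mem_inter_iff, Set.mem_setOf_eq, Set.mem_empty_iff_false, iff_false]
          rintro ⟨⟨_, h1⟩, _, h2⟩
          linarith
        have hclos : x ∈ closure (Qu θ) := hfr.1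
        obtain ⟨y, hy1, hy2⟩ := mem_closure_iff.1 hclos _ hopen hxU
        exact absurd (Set.mem_inter hy1 hy2) (by rw [hdisj]; exact Set.notMem_empty y)
    · rintro ⟨hxtL, heq⟩
      have hg1 : x.2.2 * Real.cos (dd θ x.2.1) = 1 := (hiff_eq x hxtL).1 heq
      refine ⟨?_, hxtL⟩
      rw [frontier_eq_closure_inter_closure]
      constructor
      · -- x itself is in Qu
        apply subset_closure
        rw [hQeq]
        exact ⟨hxtL, le_of_eq hg1⟩
      · -- approximate from above in r
        have htend : Filter.Tendsto (fun t : ℝ => ((x.1, x.2.1, x.2.2 + t) : ℂ × ℝ × ℝ))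
            (nhdsWithin 0 (Set.Ioi 0)) (nhds x) := by
          have hc : Continuous (fun t : ℝ => ((x.1, x.2.1, x.2.2 + t) : ℂ × ℝ × ℝ)) := by
            continuity
          have := hc.tendsto 0
          simp only [add_zero] at this
          exact this.mono_left nhdsWithin_le_nhds
        apply mem_closure_of_tendsto htend
        filter_upwards [self_mem_nhdsWithin] with t ht
        simp only [Set.mem_compl_iff]
        intro hmem
        rw [hQeq] at hmem
        have hle := hmem.2
        simp only [Set.mem_setOf_eq] at hle
        have hIoi : (0 : ℝ) < t := ht
        have : x.2.2 * Real.cos (dd θ x.2.1) < (x.2.2 + t) * Real.cos (dd θ x.2.1) := by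
          have := hcos x.2.1
          nlinarith
        linarith
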